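/- arXiv:1002.3141 — 2 statements merged into one kernel-verified Lean document; each statement's English description precedes it below -/
import Mathlib

section
/- Let H be a finitely generated subgroup of a free group F_n and let g ∈ F_n \ H. Then there is a finitely generated subgroup F' of F_n of finite index such that F' decomposes as a free product F' = H * K and g ∉ F'. -/
open Set Pointwise MeasureTheory

/-- An ℝ-tree: a geodesic metric space in which any two points are joined by a
unique topological arc, which is isometric to a real segment. -/
class RTree (T : Type*) [MetricSpace T] : Prop where
  isGeodesic : ∀ x y : T, ∃ f : ℝ → T, f 0 = x ∧ f (dist x y) = y ∧
    ∀ s ∈ Set.Icc (0:ℝ) (dist x y), ∀ t ∈ Set.Icc (0:ℝ) (dist x y),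
      dist (f s) (f t) = |s - t|
  arc_unique : ∀ (x y : T) (f g : ℝ → T) (a b c d : ℝ),
    ContinuousOn f (Set.Icc a b) → Set.InjOn f (Set.Icc a b) → f a = x → f b = y →
    ContinuousOn g (Set.Icc c d) → Set.InjOn g (Set.Icc c d) → g c = x → g d = y →
    f '' Set.Icc a b = g '' Set.Icc c d

variable {T : Type*} [MetricSpace T]

/-- The segment `[x,y]` in an ℝ-tree: the set of points between `x` and `y`. -/
def seg (x y : T) : Set T := {z | dist x z + dist z y = dist x y}

/-- A set is non-degenerate if it contains at least two points. -/
def Nondeg (I : Set T) : Prop := ∃ x ∈ I, ∃ y ∈ I, x ≠ y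

/-- A (possibly degenerate) arc of an ℝ-tree. -/
def IsArc (I : Set T) : Prop := ∃ x y : T, I = seg x y

/-- A subtree: a nonempty convex subset. -/
def IsSubtree (S : Set T) : Prop := S.Nonempty ∧ ∀ x ∈ S, ∀ y ∈ S, seg x y ⊆ S

section Action

variable (T)
variable (G : Type*) [Group G] [MulAction G T]

/-- Indecomposability of an action on an ℝ-tree (Guirardel). -/
def Indecomposable : Prop :=
  ∀ I J : Set T, IsArc I → Nondeg I → IsArc J → Nondeg J →
    ∃ (r : ℕ) (g : Fin (r + 1) → G),
      (J ⊆ ⋃ i, g i • I) ∧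
      ∀ i : Fin r, Nondeg ((g i.castSucc • I) ∩ (g i.succ • I))

/-- A transverse family: a nonempty `G`-invariant collection of non-degenerate
proper subtrees, any two distinct members of which meet in at most one point. -/
def IsTransverseFamily (𝒯 : Set (Set T)) : Prop :=
  𝒯.Nonempty ∧
  (∀ S ∈ 𝒯, IsSubtree S ∧ Nondeg S ∧ S ≠ Set.univ) ∧
  (∀ g : G, ∀ S ∈ 𝒯, g • S ∈ 𝒯) ∧
  (∀ S₁ ∈ 𝒯, ∀ S₂ ∈ 𝒯, S₁ ≠ S₂ → Set.Subsingleton (S₁ ∩ S₂))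

/-- The action has dense orbits. -/
def DenseOrbits : Prop := ∀ x : T, Dense {z : T | ∃ g : G, g • x = z}

/-- Minimality: no proper nonempty invariant subtree. -/
def MinimalAction : Prop :=
  ∀ S : Set T, IsSubtree S → (∀ g : G, g • S = S) → S = Set.univ

end Action

section Elements

variable (T)
variable {G : Type*} [Group G] [MulAction G T]

/-- Translation length of a group element acting on `T`. -/
noncomputable def translationLength (g : G) : ℝ := ⨅ x : T, dist x (g • x)

/-- A hyperbolic isometry: one with no fixed point. -/
def IsHyperbolic (g : G) : Prop := ∀ x : T, g • x ≠ x

/-- The axis (resp. fixed-point set) of `g`: points where the displacement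
is equal to the translation length. -/
noncomputable def axisSet (g : G) : Set T :=
  {x : T | dist x (g • x) = translationLength T g}

variable (G)

/-- The minimal invariant subtree of a subgroup: the union of axes of its
hyperbolic elements. -/
noncomputable def minSubtree (H : Subgroup G) : Set T :=
  ⋃ h ∈ {h : G | h ∈ H ∧ IsHyperbolic T h}, axisSet T h

/-- A maximal cyclic subgroup. -/
def IsMaximalCyclic {G : Type*} [Group G] (C : Subgroup G) : Prop :=
  (∃ c, C = Subgroup.zpowers c) ∧
  ∀ D : Subgroup G, (∃ d, D = Subgroup.zpowers d) → C ≤ D → D = C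

/-- A tripod determined by three points, none on the segment of the other two. -/
def IsTripod (x y z : T) : Prop := x ∉ seg y z ∧ y ∉ seg x z ∧ z ∉ seg x y

/-- A very small action: minimal, stabilizers of non-degenerate arcs trivial
or maximal cyclic, stabilizers of tripods trivial. -/
def VerySmall : Prop :=
  MinimalAction T G ∧
  (∀ x y : T, x ≠ y →
    MulAction.stabilizer G (seg x y) = ⊥ ∨
    IsMaximalCyclic (MulAction.stabilizer G (seg x y))) ∧
  (∀ x y z : T, IsTripod T x y z →
    MulAction.stabilizer G (seg x y ∪ seg y z ∪ seg x z) = ⊥)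

end Elements

/-- A discrete subset of a metric space. -/
def DiscreteSet (S : Set T) : Prop :=
  ∀ y ∈ S, ∃ ε > (0:ℝ), ∀ z ∈ S, dist y z < ε → z = y

/-- A finite forest: a finite union of segments. -/
def FiniteForest (F : Set T) : Prop :=
  ∃ s : Finset (T × T), F = ⋃ p ∈ s, seg p.1 p.2

/-- The Lebesgue length measure: a Borel measure giving each segment its length. -/
def IsLebesgueMeasure [MeasurableSpace T] (μ : Measure T) : Prop :=
  ∀ x y : T, μ (seg x y) = ENNReal.ofReal (dist x y)

section FreeProducts

variable {G : Type*} [Group G]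

/-- `F'` is the internal free product of its subgroups `H` and `K`. -/
def IsInternalFreeProduct (F' H K : Subgroup G) : Prop :=
  H ≤ F' ∧ K ≤ F' ∧
  Function.Injective (Monoid.Coprod.lift H.subtype K.subtype) ∧
  (Monoid.Coprod.lift H.subtype K.subtype).range = F'

/-- `H` is a free factor of `G`. -/
def IsFreeFactor (H : Subgroup G) : Prop :=
  ∃ K : Subgroup G, IsInternalFreeProduct ⊤ H K

/-- `H` is e-algebraically closed in `G`: for every `g ∉ H`, the canonical map
`H ∗ ⟨g⟩ → G` is injective, i.e. `⟨H, g⟩ ≅ H ∗ ⟨g⟩`. -/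
def IsEAlgClosed (H : Subgroup G) : Prop :=
  ∀ g : G, g ∉ H →
    Function.Injective (Monoid.Coprod.lift H.subtype (Subgroup.zpowers g).subtype)

/-- `H` is e-algebraically closed in the subgroup `F'`. -/
def IsEAlgClosedIn (H F' : Subgroup G) : Prop :=
  H ≤ F' ∧ ∀ g ∈ F', g ∉ H →
    Function.Injective (Monoid.Coprod.lift H.subtype (Subgroup.zpowers g).subtype)

end FreeProducts

open FreeGroup

theorem MHexists_perm_extend {α : Type*} [Finite α] (p : α → Prop)
    (f : ∀ a, p a → α) (hf : ∀ a ha b hb, f a ha = f b hb → a = b) :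
    ∃ π : Equiv.Perm α, ∀ a (ha : p a), π a = f a ha := by
  cases nonempty_fintype α
  classical
  set g : {a // p a} → α := fun x => f x x.2 with hg
  have hginj : Function.Injective g := fun x y h => Subtype.ext (hf _ _ _ _ h)
  have hcard : Fintype.card {a // ¬ p a} = Fintype.card {a // ¬ a ∈ Set.range g} := by
    rw [Fintype.card_subtype_compl, Fintype.card_subtype_compl]
    congr 1
    exact (Fintype.card_congr (Equiv.ofInjective g hginj))
  set e2 := Fintype.equivOfCardEq hcard
  refine ⟨((Equiv.sumCompl p).symm.trans
      (((Equiv.ofInjective g hginj).sumCongr e2).trans (Equiv.sumCompl (· ∈ Set.range g)))), ?_⟩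
  intro a ha
  simp only [Equiv.trans_apply, Equiv.sumCompl_symm_apply_of_pos ha, Equiv.sumCongr_apply,
    Sum.map_inl, Equiv.sumCompl_apply_inl]
  rfl

namespace MHall

attribute [local instance] Classical.propDecidable

variable {n : ℕ} (H : Subgroup (FreeGroup (Fin n))) (gens : Finset (FreeGroup (Fin n)))
  (g : FreeGroup (Fin n))

/-- base point of the coset space -/
def bq : FreeGroup (Fin n) ⧸ H := ((1 : FreeGroup (Fin n)) : FreeGroup (Fin n) ⧸ H)

/-- the finite set of cosets: all states visited when reading the words of the generators
(and of `g`) from the base point. -/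
noncomputable def SF : Finset (FreeGroup (Fin n) ⧸ H) :=
  (insert g gens).biUnion fun h => (Finset.range (h.toWord.length + 1)).image
    fun k => ((FreeGroup.mk (h.toWord.take k) : FreeGroup (Fin n)))⁻¹ • (bq H)

lemma mem_SF {h : FreeGroup (Fin n)} (hh : h ∈ insert g gens) {k : ℕ}
    (hk : k ≤ h.toWord.length) :
    ((FreeGroup.mk (h.toWord.take k) : FreeGroup (Fin n)))⁻¹ • (bq H) ∈ SF H gens g := by
  apply Finset.mem_biUnion.2
  exact ⟨h, hh, Finset.mem_image.2 ⟨k, Finset.mem_range.2 (Nat.lt_succ_of_le hk), rfl⟩⟩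

lemma bq_mem : bq H ∈ SF H gens g := by
  have := mem_SF H gens g (Finset.mem_insert_self g gens) (k := 0) (Nat.zero_le _)
  simpa [← FreeGroup.one_eq_mk] using this

/-- The finite type of vertices (cosets). -/
abbrev CT := {q : FreeGroup (Fin n) ⧸ H // q ∈ SF H gens g}

/-- base vertex -/
noncomputable def base : CT H gens g := ⟨bq H, bq_mem H gens g⟩

/-- A "genuine" (Stallings graph) edge at `c` with label `i`. -/
def Gen (c : CT H gens g) (i : Fin n) : Prop :=
  (FreeGroup.of i)⁻¹ • (c : FreeGroup (Fin n) ⧸ H) ∈ SF H gens g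

lemma sigma_aux (i : Fin n) :
    ∃ π : Equiv.Perm (CT H gens g), ∀ c (hc : Gen H gens g c i),
      π c = ⟨(FreeGroup.of i)⁻¹ • (c : FreeGroup (Fin n) ⧸ H), hc⟩ := by
  apply MHexists_perm_extend
  intro a ha b hb hab
  apply Subtype.ext
  have := Subtype.mk_eq_mk.1 hab
  exact smul_left_cancel _ this

/-- The permutation of the vertex set extending the genuine edges with label `i`. -/
noncomputable def sg (i : Fin n) : Equiv.Perm (CT H gens g) :=
  Classical.choose (sigma_aux H gens g i)

lemma sg_spec {c : CT H gens g} {i : Fin n} (hc : Gen H gens g c i) :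
    sg H gens g i c = ⟨(FreeGroup.of i)⁻¹ • (c : FreeGroup (Fin n) ⧸ H), hc⟩ :=
  Classical.choose_spec (sigma_aux H gens g i) c hc


/-- `WgoodF c l`: reading the word `l` from the vertex `c` only passes through
vertices of the finite coset set (i.e. through genuine edges). -/
def WgoodF (c : CT H gens g) (l : List (Fin n × Bool)) : Prop :=
  ∀ k ≤ l.length, ((FreeGroup.mk (l.take k) : FreeGroup (Fin n)))⁻¹ •
    (c : FreeGroup (Fin n) ⧸ H) ∈ SF H gens g

lemma reach_exists (c : CT H gens g) :
    ∃ m : ℕ, ∃ l : List (Fin n × Bool), l.length = m ∧ WgoodF H gens g (base H gens g) l ∧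
      ((FreeGroup.mk l : FreeGroup (Fin n)))⁻¹ • (bq H) = (c : FreeGroup (Fin n) ⧸ H) := by
  obtain ⟨q, hq⟩ := c
  obtain ⟨h, hh, hq2⟩ := Finset.mem_biUnion.1 hq
  obtain ⟨k, hk, rfl⟩ := Finset.mem_image.1 hq2
  have hk' : k ≤ h.toWord.length := Nat.lt_succ_iff.1 (Finset.mem_range.1 hk)
  refine ⟨k, h.toWord.take k, List.length_take_of_le hk', ?_, rfl⟩
  intro j hj
  have hlen : j ≤ h.toWord.length := le_trans (by simpa [List.length_take_of_le hk'] using hj) hk'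
  have hjk : j ≤ k := by simpa [List.length_take_of_le hk'] using hj
  have htk : (h.toWord.take k).take j = h.toWord.take j := by
    rw [List.take_take, min_eq_left hjk]
  rw [htk]
  exact mem_SF H gens g hh hlen

/-- distance to the base vertex through genuine edges -/
noncomputable def dep (c : CT H gens g) : ℕ := Nat.find (reach_exists H gens g c)

lemma dep_le {c : CT H gens g} {l : List (Fin n × Bool)}
    (h1 : WgoodF H gens g (base H gens g) l)
    (h2 : ((FreeGroup.mk l : FreeGroup (Fin n)))⁻¹ • (bq H) = (c : FreeGroup (Fin n) ⧸ H)) :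
    dep H gens g c ≤ l.length :=
  Nat.find_le ⟨l, rfl, h1, h2⟩

lemma dep_spec (c : CT H gens g) :
    ∃ l : List (Fin n × Bool), l.length = dep H gens g c ∧
      WgoodF H gens g (base H gens g) l ∧
      ((FreeGroup.mk l : FreeGroup (Fin n)))⁻¹ • (bq H) = (c : FreeGroup (Fin n) ⧸ H) :=
  Nat.find_spec (reach_exists H gens g c)

lemma dep_base : dep H gens g (base H gens g) = 0 := by
  have : dep H gens g (base H gens g) ≤ ([] : List (Fin n × Bool)).length := by
    apply dep_le
    · intro k hk
      simp only [List.length_nil, Nat.le_zero] at hk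
      subst hk
      simpa [← FreeGroup.one_eq_mk] using (base H gens g).2
    · simp [← FreeGroup.one_eq_mk, base]
  simpa using this

lemma eq_base_of_dep_eq_zero {c : CT H gens g} (h : dep H gens g c = 0) : c = base H gens g := by
  obtain ⟨l, hl, -, hend⟩ := dep_spec H gens g c
  rw [h, List.length_eq_zero_iff] at hl
  subst hl
  apply Subtype.ext
  rw [← hend]
  simp [← FreeGroup.one_eq_mk, bq, base]

lemma mk_single_false (i : Fin n) :
    (FreeGroup.mk [(i, false)] : FreeGroup (Fin n)) = (FreeGroup.of i)⁻¹ := by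
  rw [show (FreeGroup.of i : FreeGroup (Fin n)) = FreeGroup.mk [(i, true)] from rfl,
    FreeGroup.inv_mk]
  rfl

lemma parent_exists (c : CT H gens g) (h : dep H gens g c ≠ 0) :
    ∃ p : CT H gens g × (Fin n × Bool), dep H gens g p.1 < dep H gens g c ∧
      ((p.2.2 = true ∧ ∃ hg : Gen H gens g p.1 p.2.1, sg H gens g p.2.1 p.1 = c) ∨
       (p.2.2 = false ∧ ∃ hg : Gen H gens g c p.2.1, sg H gens g p.2.1 c = p.1)) := by
  obtain ⟨l, hl, hgood, hend⟩ := dep_spec H gens g c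
  have hne : l ≠ [] := by
    intro h0; rw [h0] at hl; exact h hl.symm
  set l0 := l.dropLast with hl0
  set a := l.getLast hne with ha
  have hsplit : l0 ++ [a] = l := List.dropLast_append_getLast hne
  have hl0len : l0.length + 1 = l.length := by
    rw [← hsplit]; simp
  have hl0take : l.take l0.length = l0 := by
    rw [← hsplit, List.take_left]
  have hgood0 : WgoodF H gens g (base H gens g) l0 := by
    intro k hk
    have : l0.take k = l.take k := by
      rw [← hsplit, List.take_append_of_le_length hk]
    rw [this] at *
    exact hgood k (le_trans hk (by omega))
  have hdmem : ((FreeGroup.mk l0 : FreeGroup (Fin n)))⁻¹ • (bq H) ∈ SF H gens g := by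
    have := hgood l0.length (by omega)
    rwa [hl0take] at this
  set d : CT H gens g := ⟨((FreeGroup.mk l0 : FreeGroup (Fin n)))⁻¹ • (bq H), hdmem⟩ with hd
  have hdep : dep H gens g d < dep H gens g c := by
    have := dep_le H gens g hgood0 (c := d) rfl
    omega
  have hstep : ((FreeGroup.mk [a] : FreeGroup (Fin n)))⁻¹ • (d : FreeGroup (Fin n) ⧸ H)
      = (c : FreeGroup (Fin n) ⧸ H) := by
    rw [← hend, ← hsplit, ← FreeGroup.mul_mk, mul_inv_rev, mul_smul]
  obtain ⟨i, bb⟩ := a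
  cases bb
  · -- letter (i, false) : c = (of i) • d, genuine edge from c to d
    rw [mk_single_false] at hstep
    simp only [inv_inv] at hstep
    have hGen : Gen H gens g c i := by
      unfold Gen
      rw [← hstep]
      simpa using d.2
    refine ⟨(d, (i, false)), hdep, Or.inr ⟨rfl, hGen, ?_⟩⟩
    rw [sg_spec H gens g hGen]
    apply Subtype.ext
    simp only [← hstep]
    rw [inv_smul_smul]
  · -- letter (i, true) : c = (of i)⁻¹ • d, genuine edge from d to c
    have hstep' : (FreeGroup.of i)⁻¹ • (d : FreeGroup (Fin n) ⧸ H)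
        = (c : FreeGroup (Fin n) ⧸ H) := hstep
    have hGen : Gen H gens g d i := by
      unfold Gen
      rw [hstep']
      exact c.2
    refine ⟨(d, (i, true)), hdep, Or.inl ⟨rfl, hGen, ?_⟩⟩
    rw [sg_spec H gens g hGen]
    exact Subtype.ext hstep'

/-- parent data -/
noncomputable def pdat (c : CT H gens g) (h : dep H gens g c ≠ 0) :
    CT H gens g × (Fin n × Bool) :=
  Classical.choose (parent_exists H gens g c h)

lemma pdat_lt (c : CT H gens g) (h : dep H gens g c ≠ 0) :
    dep H gens g (pdat H gens g c h).1 < dep H gens g c :=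
  (Classical.choose_spec (parent_exists H gens g c h)).1

lemma pdat_cases (c : CT H gens g) (h : dep H gens g c ≠ 0) :
    ((pdat H gens g c h).2.2 = true ∧ ∃ hg : Gen H gens g (pdat H gens g c h).1
        (pdat H gens g c h).2.1,
        sg H gens g (pdat H gens g c h).2.1 (pdat H gens g c h).1 = c) ∨
    ((pdat H gens g c h).2.2 = false ∧ ∃ hg : Gen H gens g c (pdat H gens g c h).2.1,
        sg H gens g (pdat H gens g c h).2.1 c = (pdat H gens g c h).1) :=
  (Classical.choose_spec (parent_exists H gens g c h)).2

/-- the transversal: spanning-tree word from the base point to `c` -/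
noncomputable def trv (c : CT H gens g) : FreeGroup (Fin n) :=
  if h : dep H gens g c = 0 then 1
  else trv (pdat H gens g c h).1 *
    (cond (pdat H gens g c h).2.2 (FreeGroup.of (pdat H gens g c h).2.1)
      (FreeGroup.of (pdat H gens g c h).2.1)⁻¹)
termination_by dep H gens g c
decreasing_by exact pdat_lt H gens g c h

lemma trv_base : trv H gens g (base H gens g) = 1 := by
  rw [trv, dif_pos (dep_base H gens g)]

/-- tree edges -/
def TE (d : CT H gens g) (i : Fin n) : Prop :=
  ∃ (c : CT H gens g) (h : dep H gens g c ≠ 0), (pdat H gens g c h).2.1 = i ∧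
    (((pdat H gens g c h).2.2 = true ∧ (pdat H gens g c h).1 = d) ∨
     ((pdat H gens g c h).2.2 = false ∧ c = d))

lemma TE_gen {d : CT H gens g} {i : Fin n} (h : TE H gens g d i) : Gen H gens g d i := by
  obtain ⟨c, hc, hi, hcase⟩ := h
  rcases pdat_cases H gens g c hc with ⟨hb, hg, -⟩ | ⟨hb, hg, -⟩ <;>
    rcases hcase with ⟨hb', hd⟩ | ⟨hb', hd⟩ <;>
      first
        | (subst hi; subst hd; exact hg)
        | (rw [hb] at hb'; exact absurd hb' (by simp))

/-- spanning tree relation: crossing a tree edge extends the transversal -/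
lemma TE_trv {d : CT H gens g} {i : Fin n} (h : TE H gens g d i) :
    trv H gens g (sg H gens g i d) = trv H gens g d * FreeGroup.of i := by
  obtain ⟨c, hc, hi, hcase⟩ := h
  rcases pdat_cases H gens g c hc with ⟨hb, hg, hs⟩ | ⟨hb, hg, hs⟩ <;>
    rcases hcase with ⟨hb', hd⟩ | ⟨hb', hd⟩
  · -- forward tree edge: parent = d, sg i d = c
    subst hi; subst hd
    rw [hs]
    conv_lhs => rw [trv, dif_neg hc]
    rw [hb]
    rfl
  · rw [hb] at hb'; exact absurd hb' (by simp)
  · rw [hb] at hb'; exact absurd hb' (by simp)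
  · -- backward tree edge: c = d, sg i c = parent
    subst hi; subst hd
    rw [hs]
    have : trv H gens g c = trv H gens g (pdat H gens g c hc).1 * (FreeGroup.of
        (pdat H gens g c hc).2.1)⁻¹ := by
      conv_lhs => rw [trv, dif_neg hc]
      rw [hb]
      rfl
    rw [this]
    group


/-- the Schreier generator attached to an edge -/
noncomputable def gam (d : CT H gens g) (i : Fin n) : FreeGroup (Fin n) :=
  trv H gens g d * FreeGroup.of i * (trv H gens g (sg H gens g i d))⁻¹

lemma gam_of_TE {d : CT H gens g} {i : Fin n} (h : TE H gens g d i) :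
    gam H gens g d i = 1 := by
  rw [gam, TE_trv H gens g h]
  group

/-- index type: genuine non-tree edges (these will freely generate a copy of `H`) -/
abbrev B1 := {e : CT H gens g × Fin n // Gen H gens g e.1 e.2 ∧ ¬ TE H gens g e.1 e.2}

/-- index type: completion edges -/
abbrev B2 := {e : CT H gens g × Fin n // ¬ Gen H gens g e.1 e.2}

/-- index type for the free basis of the finite-index subgroup -/
abbrev BT := B1 H gens g ⊕ B2 H gens g

instance : Finite (B1 H gens g) := by unfold B1; infer_instance
instance : Finite (B2 H gens g) := by unfold B2; infer_instance
instance : Finite (BT H gens g) := by unfold BT; infer_instance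

/-- edge labels for the rewriting process -/
noncomputable def rE (d : CT H gens g) (i : Fin n) : FreeGroup (BT H gens g) :=
  if h1 : TE H gens g d i then 1
  else if h2 : Gen H gens g d i then FreeGroup.of (Sum.inl ⟨(d, i), h2, h1⟩)
  else FreeGroup.of (Sum.inr ⟨(d, i), h2⟩)

lemma rE_of_TE {d : CT H gens g} {i : Fin n} (h : TE H gens g d i) :
    rE H gens g d i = 1 := dif_pos h

/-- the state space of the rewriting automaton -/
abbrev St := CT H gens g × FreeGroup (BT H gens g)

/-- one step of the automaton, reading a positive letter `i` -/
noncomputable def step (i : Fin n) : Equiv.Perm (St H gens g) where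
  toFun s := (sg H gens g i s.1, s.2 * rE H gens g s.1 i)
  invFun s := ((sg H gens g i)⁻¹ s.1, s.2 * (rE H gens g ((sg H gens g i)⁻¹ s.1) i)⁻¹)
  left_inv s := by
    obtain ⟨c, u⟩ := s
    simp
  right_inv s := by
    obtain ⟨c, u⟩ := s
    simp

/-- the rewriting automaton, as a homomorphism to permutations of states. -/
noncomputable def Phi : FreeGroup (Fin n) →* Equiv.Perm (St H gens g) :=
  FreeGroup.lift fun i => (step H gens g i)⁻¹

/-- reading a word `w` (left-to-right) starting from a state -/
noncomputable def Read (w : FreeGroup (Fin n)) (s : St H gens g) : St H gens g :=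
  Phi H gens g w⁻¹ s

lemma Phi_of (i : Fin n) : Phi H gens g (FreeGroup.of i) = (step H gens g i)⁻¹ :=
  FreeGroup.lift_apply_of

lemma Read_one (s : St H gens g) : Read H gens g 1 s = s := by
  simp only [Read, inv_one, _root_.map_one, Equiv.Perm.one_apply]

lemma Read_mul (u v : FreeGroup (Fin n)) (s : St H gens g) :
    Read H gens g (u * v) s = Read H gens g v (Read H gens g u s) := by
  simp only [Read, mul_inv_rev, _root_.map_mul, Equiv.Perm.mul_apply]

lemma Read_of (i : Fin n) (s : St H gens g) :
    Read H gens g (FreeGroup.of i) s = step H gens g i s := by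
  simp only [Read, _root_.map_inv, Phi_of, inv_inv]

lemma Read_of_inv (i : Fin n) (s : St H gens g) :
    Read H gens g (FreeGroup.of i)⁻¹ s = (step H gens g i)⁻¹ s := by
  simp only [Read, inv_inv, Phi_of]

lemma Read_inv_left (w : FreeGroup (Fin n)) (s : St H gens g) :
    Read H gens g w⁻¹ (Read H gens g w s) = s := by
  rw [← Read_mul, mul_inv_cancel, Read_one]

lemma Read_inv_right (w : FreeGroup (Fin n)) (s : St H gens g) :
    Read H gens g w (Read H gens g w⁻¹ s) = s := by
  rw [← Read_mul, inv_mul_cancel, Read_one]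

lemma step_snd (i : Fin n) (c : CT H gens g) (u : FreeGroup (BT H gens g)) :
    step H gens g i (c, u) = (sg H gens g i c, u * rE H gens g c i) := rfl

lemma step_inv_snd (i : Fin n) (c : CT H gens g) (u : FreeGroup (BT H gens g)) :
    (step H gens g i)⁻¹ (c, u) =
      ((sg H gens g i)⁻¹ c, u * (rE H gens g ((sg H gens g i)⁻¹ c) i)⁻¹) := rfl

/-- equivariance of the automaton under left multiplication in the label group -/
lemma Phi_equivariant (w : FreeGroup (Fin n)) (a : FreeGroup (BT H gens g))
    (c : CT H gens g) (u : FreeGroup (BT H gens g)) :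
    Phi H gens g w (c, a * u) =
      ((Phi H gens g w (c, u)).1, a * (Phi H gens g w (c, u)).2) := by
  have key : ∀ w : FreeGroup (Fin n), ∀ (a : FreeGroup (BT H gens g)) (s : St H gens g),
      Phi H gens g w (s.1, a * s.2) = ((Phi H gens g w s).1, a * (Phi H gens g w s).2) := by
    intro w
    induction w with
    | C1 => intro a s; simp only [_root_.map_one, Equiv.Perm.one_apply]
    | of i =>
      intro a s
      obtain ⟨cc, u⟩ := s
      rw [Phi_of,
        step_inv_snd, step_inv_snd, mul_assoc]
    | inv_of i _ =>
      intro a s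
      obtain ⟨cc, u⟩ := s
      rw [_root_.map_inv, Phi_of,
        inv_inv, step_snd, step_snd, mul_assoc]
    | mul x y hx hy =>
      intro a s
      rw [_root_.map_mul, Equiv.Perm.mul_apply, Equiv.Perm.mul_apply]
      rw [show ((Phi H gens g y) (s.1, a * s.2)) = (((Phi H gens g y) s).1,
        a * ((Phi H gens g y) s).2) from hy a s]
      exact hx a ((Phi H gens g y) s)
  exact key w a (c, u)

lemma Read_equivariant (w : FreeGroup (Fin n)) (a : FreeGroup (BT H gens g))
    (c : CT H gens g) (u : FreeGroup (BT H gens g)) :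
    Read H gens g w (c, a * u) =
      ((Read H gens g w (c, u)).1, a * (Read H gens g w (c, u)).2) :=
  Phi_equivariant H gens g w⁻¹ a c u

/-- the vertex reached after reading `w` from `c` -/
noncomputable def rcm (w : FreeGroup (Fin n)) (c : CT H gens g) : CT H gens g :=
  (Read H gens g w (c, 1)).1

/-- the rewritten word collected while reading `w` from `c` -/
noncomputable def rr (w : FreeGroup (Fin n)) (c : CT H gens g) : FreeGroup (BT H gens g) :=
  (Read H gens g w (c, 1)).2

lemma Read_eq (w : FreeGroup (Fin n)) (c : CT H gens g) (u : FreeGroup (BT H gens g)) :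
    Read H gens g w (c, u) = (rcm H gens g w c, u * rr H gens g w c) := by
  have := Read_equivariant H gens g w u c 1
  rw [mul_one] at this
  rw [this]
  rfl

lemma rcm_mul (u v : FreeGroup (Fin n)) (c : CT H gens g) :
    rcm H gens g (u * v) c = rcm H gens g v (rcm H gens g u c) := by
  unfold rcm
  rw [Read_mul]
  conv_lhs => rw [show Read H gens g u (c, 1) = (rcm H gens g u c, rr H gens g u c) from rfl]
  rw [show ((rcm H gens g u c, rr H gens g u c) : St H gens g)
      = (rcm H gens g u c, rr H gens g u c * 1) from by rw [mul_one],
    Read_equivariant]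
  rfl

lemma rr_mul (u v : FreeGroup (Fin n)) (c : CT H gens g) :
    rr H gens g (u * v) c = rr H gens g u c * rr H gens g v (rcm H gens g u c) := by
  unfold rr
  rw [Read_mul]
  conv_lhs => rw [show Read H gens g u (c, 1) = (rcm H gens g u c, rr H gens g u c) from rfl]
  rw [show ((rcm H gens g u c, rr H gens g u c) : St H gens g)
      = (rcm H gens g u c, rr H gens g u c * 1) from by rw [mul_one],
    Read_equivariant]
  simp only [mul_one]
  rfl

lemma rcm_of (i : Fin n) (c : CT H gens g) :
    rcm H gens g (FreeGroup.of i) c = sg H gens g i c := by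
  unfold rcm
  rw [Read_of]
  rfl

lemma rr_of (i : Fin n) (c : CT H gens g) :
    rr H gens g (FreeGroup.of i) c = rE H gens g c i := by
  unfold rr
  rw [Read_of]
  show 1 * rE H gens g c i = _
  rw [one_mul]

lemma rcm_of_inv (i : Fin n) (c : CT H gens g) :
    rcm H gens g (FreeGroup.of i)⁻¹ c = (sg H gens g i)⁻¹ c := by
  unfold rcm
  rw [Read_of_inv]
  rfl

lemma rr_of_inv (i : Fin n) (c : CT H gens g) :
    rr H gens g (FreeGroup.of i)⁻¹ c = (rE H gens g ((sg H gens g i)⁻¹ c) i)⁻¹ := by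
  unfold rr
  rw [Read_of_inv]
  show 1 * _ = _
  rw [one_mul]

lemma rcm_one (c : CT H gens g) : rcm H gens g 1 c = c := by
  unfold rcm; rw [Read_one]

lemma rr_one (c : CT H gens g) : rr H gens g 1 c = 1 := by
  unfold rr; rw [Read_one]

/-- the embedding of the free group on the edge basis into the ambient free group -/
noncomputable def emb : FreeGroup (BT H gens g) →* FreeGroup (Fin n) :=
  FreeGroup.lift (Sum.elim (fun b : B1 H gens g => gam H gens g b.1.1 b.1.2)
    (fun b : B2 H gens g => gam H gens g b.1.1 b.1.2))

lemma emb_rE (d : CT H gens g) (i : Fin n) :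
    emb H gens g (rE H gens g d i) = gam H gens g d i := by
  unfold rE
  split_ifs with h1 h2
  · rw [_root_.map_one, gam_of_TE H gens g h1]
  · simp [emb, FreeGroup.lift_apply_of]
  · simp [emb, FreeGroup.lift_apply_of]


/-- Schreier rewriting identity: reading `w` from `c` gives the rewriting of `w`
in the Schreier generators. -/
lemma trv_mul (w : FreeGroup (Fin n)) (c : CT H gens g) :
    trv H gens g c * w = emb H gens g (rr H gens g w c) * trv H gens g (rcm H gens g w c) := by
  induction w using FreeGroup.induction_on generalizing c with
  | C1 => simp [rr_one, rcm_one]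
  | of i =>
    rw [rr_of, rcm_of, emb_rE, gam]
    group
  | inv_of i _ =>
    rw [rr_of_inv, rcm_of_inv,
      _root_.map_inv, emb_rE, gam, Equiv.Perm.coe_inv, Equiv.apply_symm_apply]
    group
  | mul x y hx hy =>
    rw [rr_mul, rcm_mul, _root_.map_mul]
    calc trv H gens g c * (x * y) = (trv H gens g c * x) * y := by rw [mul_assoc]
      _ = (emb H gens g (rr H gens g x c) * trv H gens g (rcm H gens g x c)) * y := by rw [hx c]
      _ = emb H gens g (rr H gens g x c) * (trv H gens g (rcm H gens g x c) * y) := by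
          rw [mul_assoc]
      _ = _ := by rw [hy (rcm H gens g x c), ← mul_assoc]

/-- reading the transversal word of `c` from the base leads to `c` and crosses
only tree edges. -/
lemma Read_trv (c : CT H gens g) :
    Read H gens g (trv H gens g c) (base H gens g, 1) = (c, 1) := by
  have key : ∀ (m : ℕ) (c : CT H gens g), dep H gens g c ≤ m →
      Read H gens g (trv H gens g c) (base H gens g, 1) = (c, 1) := by
    intro m
    induction m with
    | zero =>
      intro c hc
      have h0 : dep H gens g c = 0 := Nat.le_zero.1 hc
      rw [eq_base_of_dep_eq_zero H gens g h0, trv_base, Read_one]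
    | succ m ih =>
      intro c hc
      by_cases h0 : dep H gens g c = 0
      · rw [eq_base_of_dep_eq_zero H gens g h0, trv_base, Read_one]
      · have hplt := pdat_lt H gens g c h0
        have hple : dep H gens g (pdat H gens g c h0).1 ≤ m := by omega
        rcases pdat_cases H gens g c h0 with ⟨hb, hg, hs⟩ | ⟨hb, hg, hs⟩
        · have hTE : TE H gens g (pdat H gens g c h0).1 (pdat H gens g c h0).2.1 :=
            ⟨c, h0, rfl, Or.inl ⟨hb, rfl⟩⟩
          conv_lhs => rw [trv, dif_neg h0, hb]
          rw [Read_mul, ih _ hple]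
          show Read H gens g (FreeGroup.of (pdat H gens g c h0).2.1) _ = _
          rw [Read_of, step_snd, hs, rE_of_TE H gens g hTE, one_mul]
        · have hTE : TE H gens g c (pdat H gens g c h0).2.1 :=
            ⟨c, h0, rfl, Or.inr ⟨hb, rfl⟩⟩
          conv_lhs => rw [trv, dif_neg h0, hb]
          rw [Read_mul, ih _ hple]
          show Read H gens g (FreeGroup.of (pdat H gens g c h0).2.1)⁻¹ _ = _
          rw [Read_of_inv, step_inv_snd, ← hs, Equiv.Perm.coe_inv, Equiv.symm_apply_apply,
            rE_of_TE H gens g hTE, inv_one, one_mul]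
  exact key (dep H gens g c) c le_rfl

/-- the transversal word of `c` indeed represents the coset `c`. -/
lemma trv_smul (c : CT H gens g) :
    (trv H gens g c)⁻¹ • bq H = (c : FreeGroup (Fin n) ⧸ H) := by
  have key : ∀ (m : ℕ) (c : CT H gens g), dep H gens g c ≤ m →
      (trv H gens g c)⁻¹ • bq H = (c : FreeGroup (Fin n) ⧸ H) := by
    intro m
    induction m with
    | zero =>
      intro c hc
      have h0 : dep H gens g c = 0 := Nat.le_zero.1 hc
      rw [eq_base_of_dep_eq_zero H gens g h0, trv_base, inv_one, one_smul]
      rfl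
    | succ m ih =>
      intro c hc
      by_cases h0 : dep H gens g c = 0
      · rw [eq_base_of_dep_eq_zero H gens g h0, trv_base, inv_one, one_smul]
        rfl
      · have hplt := pdat_lt H gens g c h0
        have hple : dep H gens g (pdat H gens g c h0).1 ≤ m := by omega
        rcases pdat_cases H gens g c h0 with ⟨hb, hg, hs⟩ | ⟨hb, hg, hs⟩
        · have hcoe : (c : FreeGroup (Fin n) ⧸ H) =
              (FreeGroup.of (pdat H gens g c h0).2.1)⁻¹ •
                ((pdat H gens g c h0).1 : FreeGroup (Fin n) ⧸ H) :=
            congrArg Subtype.val (hs.symm.trans (sg_spec H gens g hg))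
          conv_lhs => rw [trv, dif_neg h0, hb]
          show ((trv H gens g (pdat H gens g c h0).1 *
            FreeGroup.of (pdat H gens g c h0).2.1))⁻¹ • bq H = _
          rw [mul_inv_rev, mul_smul, ih _ hple]
          exact hcoe.symm
        · have hcoe : ((pdat H gens g c h0).1 : FreeGroup (Fin n) ⧸ H) =
              (FreeGroup.of (pdat H gens g c h0).2.1)⁻¹ •
                (c : FreeGroup (Fin n) ⧸ H) :=
            congrArg Subtype.val (hs.symm.trans (sg_spec H gens g hg))
          conv_lhs => rw [trv, dif_neg h0, hb]
          show ((trv H gens g (pdat H gens g c h0).1 *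
            (FreeGroup.of (pdat H gens g c h0).2.1)⁻¹))⁻¹ • bq H = _
          rw [mul_inv_rev, inv_inv, mul_smul, ih _ hple, hcoe, smul_inv_smul]
  exact key (dep H gens g c) c le_rfl

/-- all Schreier generators of genuine edges belong to `H`. -/
lemma gam_mem {d : CT H gens g} {i : Fin n} (hg : Gen H gens g d i) :
    gam H gens g d i ∈ H := by
  set e := sg H gens g i d with he
  have hcoe : (e : FreeGroup (Fin n) ⧸ H) =
      (FreeGroup.of i)⁻¹ • (d : FreeGroup (Fin n) ⧸ H) := by
    rw [he, sg_spec H gens g hg]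
  have hsmul : (gam H gens g d i)⁻¹ • bq H = bq H := by
    rw [gam, mul_inv_rev, mul_inv_rev, inv_inv, ← he]
    rw [mul_smul, mul_smul, trv_smul, ← hcoe]
    have := trv_smul H gens g e
    calc trv H gens g e • (e : FreeGroup (Fin n) ⧸ H)
        = trv H gens g e • ((trv H gens g e)⁻¹ • bq H) := by rw [this]
      _ = bq H := smul_inv_smul _ _
  have : ((gam H gens g d i)⁻¹ : FreeGroup (Fin n)) • ((1 : FreeGroup (Fin n)) :
      FreeGroup (Fin n) ⧸ H) = ((1 : FreeGroup (Fin n)) : FreeGroup (Fin n) ⧸ H) := hsmul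
  rw [MulAction.Quotient.smul_mk] at this
  have := QuotientGroup.eq.1 this
  simpa using this

/-- reading a rewritten word from the base: the automaton unreads it. -/
lemma Read_emb (u : FreeGroup (BT H gens g)) :
    Read H gens g (emb H gens g u) (base H gens g, 1) = (base H gens g, u) := by
  induction u with
  | C1 => rw [_root_.map_one, Read_one]
  | of b =>
    have key : ∀ (d : CT H gens g) (i : Fin n),
        rE H gens g d i = FreeGroup.of b →
        emb H gens g (FreeGroup.of b) = gam H gens g d i →
        Read H gens g (emb H gens g (FreeGroup.of b)) (base H gens g, 1) =
          (base H gens g, FreeGroup.of b) := by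
      intro d i hrE hemb
      rw [hemb, gam]
      rw [Read_mul, Read_mul, Read_trv, Read_of, step_snd, hrE, one_mul]
      have h2 : Read H gens g (trv H gens g (sg H gens g i d))⁻¹
          (sg H gens g i d, 1) = (base H gens g, 1) := by
        have := Read_inv_left H gens g (trv H gens g (sg H gens g i d)) (base H gens g, 1)
        rwa [Read_trv] at this
      calc Read H gens g (trv H gens g (sg H gens g i d))⁻¹
            (sg H gens g i d, FreeGroup.of b)
          = Read H gens g (trv H gens g (sg H gens g i d))⁻¹
            (sg H gens g i d, FreeGroup.of b * 1) := by rw [mul_one]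
        _ = (base H gens g, FreeGroup.of b * 1) := by
            rw [Read_equivariant, h2]
        _ = (base H gens g, FreeGroup.of b) := by rw [mul_one]
    show Read H gens g (emb H gens g (FreeGroup.of b)) (base H gens g, 1) =
      (base H gens g, FreeGroup.of b)
    obtain b | b := b
    · obtain ⟨⟨d, i⟩, h2, h1⟩ := b
      refine key d i ?_ ?_
      · rw [rE, dif_neg h1, dif_pos h2]
      · rw [emb, FreeGroup.lift_apply_of]
        rfl
    · obtain ⟨⟨d, i⟩, h2⟩ := b
      have h1 : ¬ TE H gens g d i := fun hTE => h2 (TE_gen H gens g hTE)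
      refine key d i ?_ ?_
      · rw [rE, dif_neg h1, dif_neg h2]
      · rw [emb, FreeGroup.lift_apply_of]
        rfl
  | inv_of b hb =>
    have hb' : Read H gens g (emb H gens g (FreeGroup.of b)) (base H gens g, 1)
        = (base H gens g, FreeGroup.of b) := hb
    show Read H gens g (emb H gens g (FreeGroup.of b)⁻¹) (base H gens g, 1)
        = (base H gens g, (FreeGroup.of b)⁻¹)
    rw [_root_.map_inv]
    have step1 : Read H gens g (emb H gens g (FreeGroup.of b))
        (base H gens g, (FreeGroup.of b)⁻¹) = (base H gens g, 1) := by
      have h3 : ((base H gens g : CT H gens g), ((FreeGroup.of b)⁻¹ : FreeGroup (BT H gens g)))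
          = (base H gens g, (FreeGroup.of b)⁻¹ * 1) := by rw [mul_one]
      rw [h3, Read_equivariant, hb']
      show ((base H gens g : CT H gens g), (FreeGroup.of b)⁻¹ * FreeGroup.of b)
        = (base H gens g, 1)
      rw [inv_mul_cancel]
    have h4 := congrArg (Read H gens g (emb H gens g (FreeGroup.of b))⁻¹) step1
    rw [Read_inv_left] at h4
    exact h4.symm
  | mul x y hx hy =>
    rw [_root_.map_mul, Read_mul, hx]
    have h3 : ((base H gens g : CT H gens g), (x : FreeGroup (BT H gens g)))
        = (base H gens g, x * 1) := by rw [mul_one]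
    rw [h3, Read_equivariant, hy]

lemma emb_injective : Function.Injective (emb H gens g) := by
  intro u v huv
  have h1 := Read_emb H gens g u
  rw [huv, Read_emb] at h1
  exact ((Prod.ext_iff.1 h1).2).symm

lemma mem_range_emb_iff (w : FreeGroup (Fin n)) :
    w ∈ (emb H gens g).range ↔ rcm H gens g w (base H gens g) = base H gens g := by
  constructor
  · rintro ⟨u, rfl⟩
    unfold rcm
    rw [Read_emb]
  · intro h
    have := trv_mul H gens g w (base H gens g)
    rw [trv_base, one_mul, h, trv_base, mul_one] at this
    exact ⟨rr H gens g w (base H gens g), this.symm⟩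


/-- inclusion of the two free factors into the free group on all edges -/
noncomputable def j1 : FreeGroup (B1 H gens g) →* FreeGroup (BT H gens g) :=
  FreeGroup.lift fun b => FreeGroup.of (Sum.inl b)

noncomputable def j2 : FreeGroup (B2 H gens g) →* FreeGroup (BT H gens g) :=
  FreeGroup.lift fun b => FreeGroup.of (Sum.inr b)

lemma rE_mem_of_gen {d : CT H gens g} {i : Fin n} (hg : Gen H gens g d i) :
    rE H gens g d i ∈ (j1 H gens g).range := by
  by_cases h1 : TE H gens g d i
  · rw [rE, dif_pos h1]
    exact one_mem _
  · rw [rE, dif_neg h1, dif_pos hg]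
    exact ⟨FreeGroup.of ⟨(d, i), hg, h1⟩, FreeGroup.lift_apply_of⟩

/-- reading a word through genuine edges tracks cosets and produces
rewritten words in the first factor only. -/
lemma good_read : ∀ (l : List (Fin n × Bool)) (c : CT H gens g)
    (u : FreeGroup (BT H gens g)), WgoodF H gens g c l →
    ∃ v ∈ (j1 H gens g).range,
      (Read H gens g (FreeGroup.mk l) (c, u)).2 = u * v ∧
      ((Read H gens g (FreeGroup.mk l) (c, u)).1 : FreeGroup (Fin n) ⧸ H) =
        ((FreeGroup.mk l : FreeGroup (Fin n)))⁻¹ • (c : FreeGroup (Fin n) ⧸ H) := by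
  intro l
  induction l with
  | nil =>
    intro c u _
    refine ⟨1, one_mem _, ?_, ?_⟩
    · rw [← FreeGroup.one_eq_mk, Read_one, mul_one]
    · rw [← FreeGroup.one_eq_mk, Read_one, inv_one, one_smul]
  | cons a l ih =>
    obtain ⟨i, bb⟩ := a
    intro c u hw
    cases bb
    · -- reading the letter (i, false)
      have h1 : FreeGroup.of i • (c : FreeGroup (Fin n) ⧸ H) ∈ SF H gens g := by
        have := hw 1 (by simp)
        rwa [List.take_succ_cons, List.take_zero, mk_single_false, inv_inv] at this
      set d : CT H gens g := ⟨FreeGroup.of i • (c : FreeGroup (Fin n) ⧸ H), h1⟩ with hd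
      have hgd : Gen H gens g d i := by
        show (FreeGroup.of i)⁻¹ • (d : FreeGroup (Fin n) ⧸ H) ∈ SF H gens g
        rw [hd]
        show (FreeGroup.of i)⁻¹ • (FreeGroup.of i • (c : FreeGroup (Fin n) ⧸ H)) ∈ _
        rw [inv_smul_smul]
        exact c.2
      have hsg : sg H gens g i d = c := by
        apply Subtype.ext
        rw [congrArg Subtype.val (sg_spec H gens g hgd)]
        show (FreeGroup.of i)⁻¹ • (FreeGroup.of i • (c : FreeGroup (Fin n) ⧸ H)) = _
        rw [inv_smul_smul]
      have hinv : (sg H gens g i)⁻¹ c = d := by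
        rw [← hsg, Equiv.Perm.coe_inv, Equiv.symm_apply_apply]
      have hmk : (FreeGroup.mk ((i, false) :: l) : FreeGroup (Fin n))
          = (FreeGroup.of i)⁻¹ * FreeGroup.mk l := by
        rw [← mk_single_false, FreeGroup.mul_mk]
        rfl
      have hw' : WgoodF H gens g d l := by
        intro k hk
        rw [hd]
        show (FreeGroup.mk (l.take k) : FreeGroup (Fin n))⁻¹ •
          (FreeGroup.of i • (c : FreeGroup (Fin n) ⧸ H)) ∈ _
        rw [show (FreeGroup.of i : FreeGroup (Fin n)) = ((FreeGroup.of i)⁻¹)⁻¹ from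
          (inv_inv _).symm, ← mul_smul, ← mul_inv_rev, ← mk_single_false, FreeGroup.mul_mk]
        have h2 := hw (k + 1) (by simpa using Nat.succ_le_succ hk)
        rwa [List.take_succ_cons] at h2
      obtain ⟨v', hv', hsnd, hfst⟩ := ih d (u * (rE H gens g d i)⁻¹) hw'
      refine ⟨(rE H gens g d i)⁻¹ * v',
        mul_mem (inv_mem (rE_mem_of_gen H gens g hgd)) hv', ?_, ?_⟩
      · rw [hmk, Read_mul, Read_of_inv, step_inv_snd, hinv, hsnd, mul_assoc]
      · rw [hmk, Read_mul, Read_of_inv, step_inv_snd, hinv, hfst]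
        try rw [mul_inv_rev, inv_inv, mul_smul]
        try rfl
    · -- reading the letter (i, true)
      have hGen : Gen H gens g c i := by
        have := hw 1 (by simp)
        rwa [List.take_succ_cons, List.take_zero] at this
      have hc1 : ((sg H gens g i c : CT H gens g) : FreeGroup (Fin n) ⧸ H)
          = (FreeGroup.of i)⁻¹ • (c : FreeGroup (Fin n) ⧸ H) :=
        congrArg Subtype.val (sg_spec H gens g hGen)
      have hmk : (FreeGroup.mk ((i, true) :: l) : FreeGroup (Fin n))
          = FreeGroup.of i * FreeGroup.mk l := by
        rw [show (FreeGroup.of i : FreeGroup (Fin n)) = FreeGroup.mk [(i, true)] from rfl,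
          FreeGroup.mul_mk]
        rfl
      have hw' : WgoodF H gens g (sg H gens g i c) l := by
        intro k hk
        rw [hc1, ← mul_smul, ← mul_inv_rev,
          show (FreeGroup.of i : FreeGroup (Fin n)) = FreeGroup.mk [(i, true)] from rfl,
          FreeGroup.mul_mk]
        have h2 := hw (k + 1) (by simpa using Nat.succ_le_succ hk)
        rwa [List.take_succ_cons] at h2
      obtain ⟨v', hv', hsnd, hfst⟩ := ih (sg H gens g i c) (u * rE H gens g c i) hw'
      refine ⟨rE H gens g c i * v', mul_mem (rE_mem_of_gen H gens g hGen) hv', ?_, ?_⟩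
      · rw [hmk, Read_mul, Read_of, step_snd, hsnd, mul_assoc]
      · rw [hmk, Read_mul, Read_of, step_snd, hfst, hc1, ← mul_smul, ← mul_inv_rev]

/-- the action of the ambient free group on the finite vertex set. -/
noncomputable def phiC : FreeGroup (Fin n) →* Equiv.Perm (CT H gens g) :=
  FreeGroup.lift fun i => (sg H gens g i)⁻¹

lemma Phi_fst (w : FreeGroup (Fin n)) (s : St H gens g) :
    (Phi H gens g w s).1 = phiC H gens g w s.1 := by
  induction w generalizing s with
  | C1 => rw [_root_.map_one, _root_.map_one]; rfl
  | of i =>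
    rw [Phi_of,
      phiC, FreeGroup.lift_apply_of]
    obtain ⟨c, u⟩ := s
    rw [step_inv_snd]
  | inv_of i _ =>
    rw [_root_.map_inv,
      _root_.map_inv, Phi_of, inv_inv, phiC, FreeGroup.lift_apply_of, inv_inv]
    obtain ⟨c, u⟩ := s
    rw [step_snd]
  | mul x y hx hy =>
    rw [_root_.map_mul, _root_.map_mul, Equiv.Perm.mul_apply, Equiv.Perm.mul_apply, hx, hy]

lemma rcm_eq_phiC (w : FreeGroup (Fin n)) (c : CT H gens g) :
    rcm H gens g w c = phiC H gens g w⁻¹ c := by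
  unfold rcm Read
  rw [Phi_fst]

lemma mem_range_emb_iff_phiC (w : FreeGroup (Fin n)) :
    w ∈ (emb H gens g).range ↔ phiC H gens g w (base H gens g) = base H gens g := by
  rw [mem_range_emb_iff, rcm_eq_phiC, _root_.map_inv]
  constructor
  · intro h
    conv_lhs => rw [← h]
    rw [Equiv.Perm.coe_inv, Equiv.apply_symm_apply]
  · intro h
    conv_lhs => rw [← h]
    rw [Equiv.Perm.coe_inv, Equiv.symm_apply_apply]

lemma finiteIndex_range_emb : (emb H gens g).range.FiniteIndex := by
  have hker : (phiC H gens g).ker ≤ (emb H gens g).range := by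
    intro w hw
    rw [MonoidHom.mem_ker] at hw
    rw [mem_range_emb_iff_phiC, hw]
    rfl
  haveI : Finite (Equiv.Perm (CT H gens g)) := by infer_instance
  haveI : (MonoidHom.ker (phiC H gens g)).FiniteIndex := Subgroup.finiteIndex_ker _
  exact Subgroup.finiteIndex_of_le hker

/-- the first factor maps into `H`. -/
lemma emb_j1_mem (u : FreeGroup (B1 H gens g)) : emb H gens g (j1 H gens g u) ∈ H := by
  induction u with
  | C1 => rw [_root_.map_one, _root_.map_one]; exact one_mem H
  | of b =>
    rw [
      j1, FreeGroup.lift_apply_of, emb, FreeGroup.lift_apply_of]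
    exact gam_mem H gens g b.2.1
  | inv_of b _ =>
    rw [_root_.map_inv,
      _root_.map_inv]
    apply inv_mem
    rw [j1, FreeGroup.lift_apply_of, emb, FreeGroup.lift_apply_of]
    exact gam_mem H gens g b.2.1
  | mul x y hx hy =>
    rw [_root_.map_mul, _root_.map_mul]
    exact mul_mem hx hy

lemma smul_bq_eq_iff (w : FreeGroup (Fin n)) : w⁻¹ • bq H = bq H ↔ w ∈ H := by
  show w⁻¹ • ((1 : FreeGroup (Fin n)) : FreeGroup (Fin n) ⧸ H) =
    ((1 : FreeGroup (Fin n)) : FreeGroup (Fin n) ⧸ H) ↔ _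
  rw [MulAction.Quotient.smul_mk]
  constructor
  · intro h
    have := QuotientGroup.eq.1 h
    simpa using this
  · intro h
    apply QuotientGroup.eq.2
    simpa using h

/-- reading a generator of `H` (or `g`) from the base. -/
lemma word_read (h : FreeGroup (Fin n)) (hh : h ∈ insert g gens) :
    ∃ v ∈ (j1 H gens g).range,
      rr H gens g h (base H gens g) = v ∧
      ((rcm H gens g h (base H gens g) : CT H gens g) : FreeGroup (Fin n) ⧸ H) =
        h⁻¹ • bq H := by
  have hwg : WgoodF H gens g (base H gens g) h.toWord := by
    intro k hk
    exact mem_SF H gens g hh hk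
  obtain ⟨v, hv, hsnd, hfst⟩ := good_read H gens g h.toWord (base H gens g) 1 hwg
  rw [FreeGroup.mk_toWord] at hsnd hfst
  exact ⟨v, hv, by rw [show rr H gens g h (base H gens g) =
    (Read H gens g h (base H gens g, 1)).2 from rfl, hsnd, one_mul], hfst⟩

lemma g_not_mem (hg : g ∉ H) : g ∉ (emb H gens g).range := by
  intro hmem
  obtain ⟨v, hv, hsnd, hfst⟩ := word_read H gens g g (Finset.mem_insert_self g gens)
  rw [mem_range_emb_iff] at hmem
  rw [hmem] at hfst
  exact hg ((smul_bq_eq_iff H g).1 hfst.symm)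

/-- `H` is exactly the image of the first free factor. -/
lemma H_eq (hcl : Subgroup.closure (gens : Set (FreeGroup (Fin n))) = H) :
    Subgroup.map (emb H gens g) (j1 H gens g).range = H := by
  apply le_antisymm
  · rintro x ⟨v, ⟨u, rfl⟩, rfl⟩
    exact emb_j1_mem H gens g u
  · have key : Subgroup.closure (gens : Set (FreeGroup (Fin n))) ≤
        Subgroup.map (emb H gens g) (j1 H gens g).range := by
      rw [Subgroup.closure_le]
      intro h hh
      obtain ⟨v, hv, hsnd, hfst⟩ := word_read H gens g h (Finset.mem_insert_of_mem hh)
      have hH : h ∈ H := hcl ▸ Subgroup.subset_closure hh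
      have hbase : rcm H gens g h (base H gens g) = base H gens g := by
        apply Subtype.ext
        rw [hfst]
        exact (smul_bq_eq_iff H h).2 hH
      have := trv_mul H gens g h (base H gens g)
      rw [trv_base, one_mul, hbase, trv_base, mul_one, hsnd] at this
      exact ⟨v, hv, this.symm⟩
    rw [hcl] at key
    exact key


lemma liftj_injective : Function.Injective
    (Monoid.Coprod.lift (j1 H gens g) (j2 H gens g)) := by
  set τ : FreeGroup (BT H gens g) →*
      Monoid.Coprod (FreeGroup (B1 H gens g)) (FreeGroup (B2 H gens g)) :=
    FreeGroup.lift (Sum.elim (fun b => Monoid.Coprod.inl (FreeGroup.of b))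
      (fun b => Monoid.Coprod.inr (FreeGroup.of b))) with hτ
  have hcomp : τ.comp (Monoid.Coprod.lift (j1 H gens g) (j2 H gens g)) = MonoidHom.id _ := by
    apply Monoid.Coprod.hom_ext
    · apply FreeGroup.ext_hom
      intro b
      simp only [MonoidHom.comp_apply, Monoid.Coprod.lift_apply_inl, MonoidHom.id_apply]
      rw [j1, FreeGroup.lift_apply_of, hτ, FreeGroup.lift_apply_of]
      rfl
    · apply FreeGroup.ext_hom
      intro b
      simp only [MonoidHom.comp_apply, Monoid.Coprod.lift_apply_inr, MonoidHom.id_apply]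
      rw [j2, FreeGroup.lift_apply_of, hτ, FreeGroup.lift_apply_of]
      rfl
  intro a b hab
  have ha := DFunLike.congr_fun hcomp a
  have hb := DFunLike.congr_fun hcomp b
  simp only [MonoidHom.comp_apply, MonoidHom.id_apply] at ha hb
  rw [← ha, ← hb, hab]

lemma ranges_sup_top : (j1 H gens g).range ⊔ (j2 H gens g).range = ⊤ := by
  have key : ∀ x : FreeGroup (BT H gens g), x ∈ (j1 H gens g).range ⊔ (j2 H gens g).range := by
    intro x
    induction x with
    | C1 => exact one_mem _
    | of b =>
      obtain b | b := b
      · exact Subgroup.mem_sup_left ⟨FreeGroup.of b, FreeGroup.lift_apply_of⟩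
      · exact Subgroup.mem_sup_right ⟨FreeGroup.of b, FreeGroup.lift_apply_of⟩
    | inv_of b hb => exact inv_mem hb
    | mul x y hx hy => exact mul_mem hx hy
  rw [eq_top_iff]
  exact fun x _ => key x

end MHall

theorem marshall_hall' {n : ℕ} (H : Subgroup (FreeGroup (Fin n))) (hfg : H.FG)
    (g : FreeGroup (Fin n)) (hg : g ∉ H) :
    ∃ F' : Subgroup (FreeGroup (Fin n)), F'.FG ∧ F'.FiniteIndex ∧ g ∉ F' ∧
      ∃ K : Subgroup (FreeGroup (Fin n)),
        (H ≤ F' ∧ K ≤ F' ∧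
          Function.Injective (Monoid.Coprod.lift H.subtype K.subtype) ∧
          (Monoid.Coprod.lift H.subtype K.subtype).range = F') := by
  classical
  obtain ⟨gens, hcl⟩ := hfg
  set F' : Subgroup (FreeGroup (Fin n)) := (MHall.emb H gens g).range with hF'
  set K : Subgroup (FreeGroup (Fin n)) :=
    Subgroup.map (MHall.emb H gens g) (MHall.j2 H gens g).range with hK
  haveI hFI : F'.FiniteIndex := MHall.finiteIndex_range_emb H gens g
  haveI : Group.FG (FreeGroup (Fin n)) :=
    Group.fg_iff.2 ⟨Set.range FreeGroup.of, FreeGroup.closure_range_of _, Set.finite_range _⟩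
  have hFG : F'.FG := by
    haveI := Subgroup.fg_of_index_ne_zero F'
    exact (Group.fg_iff_subgroup_fg F').1 inferInstance
  have hHle : H ≤ F' := by
    rw [← MHall.H_eq H gens g hcl]
    rintro _ ⟨v, hv, rfl⟩
    exact ⟨v, rfl⟩
  have hKle : K ≤ F' := by
    rintro _ ⟨v, hv, rfl⟩
    exact ⟨v, rfl⟩
  set e1 : FreeGroup (MHall.B1 H gens g) →* H :=
    MonoidHom.codRestrict ((MHall.emb H gens g).comp (MHall.j1 H gens g)) H
      (fun x => MHall.emb_j1_mem H gens g x) with he1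
  set e2 : FreeGroup (MHall.B2 H gens g) →* K :=
    MonoidHom.codRestrict ((MHall.emb H gens g).comp (MHall.j2 H gens g)) K
      (fun x => ⟨MHall.j2 H gens g x, ⟨x, rfl⟩, rfl⟩) with he2
  have e1surj : Function.Surjective e1 := by
    rintro ⟨x, hx⟩
    rw [← MHall.H_eq H gens g hcl] at hx
    obtain ⟨v, ⟨u, rfl⟩, hvx⟩ := hx
    exact ⟨u, Subtype.ext hvx⟩
  have e2surj : Function.Surjective e2 := by
    rintro ⟨x, hx⟩
    obtain ⟨v, ⟨u, rfl⟩, hvx⟩ := hx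
    exact ⟨u, Subtype.ext hvx⟩
  have hmapsur : Function.Surjective (Monoid.Coprod.map e1 e2) := by
    have hrange : (Monoid.Coprod.map e1 e2).range = ⊤ := by
      rw [Monoid.Coprod.range_eq, Monoid.Coprod.map_comp_inl, Monoid.Coprod.map_comp_inr,
        MonoidHom.range_comp, MonoidHom.range_comp,
        MonoidHom.range_eq_top.2 e1surj, MonoidHom.range_eq_top.2 e2surj,
        ← MonoidHom.range_eq_map, ← MonoidHom.range_eq_map,
        Monoid.Coprod.range_inl_sup_range_inr]
    exact MonoidHom.range_eq_top.1 hrange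
  have hcompose : (Monoid.Coprod.lift H.subtype K.subtype).comp (Monoid.Coprod.map e1 e2)
      = (MHall.emb H gens g).comp
        (Monoid.Coprod.lift (MHall.j1 H gens g) (MHall.j2 H gens g)) := by
    apply Monoid.Coprod.hom_ext
    · apply FreeGroup.ext_hom
      intro b
      simp only [MonoidHom.comp_apply, Monoid.Coprod.map_apply_inl,
        Monoid.Coprod.lift_apply_inl]
      rfl
    · apply FreeGroup.ext_hom
      intro b
      simp only [MonoidHom.comp_apply, Monoid.Coprod.map_apply_inr,
        Monoid.Coprod.lift_apply_inr]
      rfl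
  have hinj : Function.Injective (Monoid.Coprod.lift H.subtype K.subtype) := by
    intro a b hab
    obtain ⟨a', rfl⟩ := hmapsur a
    obtain ⟨b', rfl⟩ := hmapsur b
    have h2 : ((Monoid.Coprod.lift H.subtype K.subtype).comp (Monoid.Coprod.map e1 e2)) a'
        = ((Monoid.Coprod.lift H.subtype K.subtype).comp (Monoid.Coprod.map e1 e2)) b' := hab
    rw [hcompose, MonoidHom.comp_apply, MonoidHom.comp_apply] at h2
    have h3 := MHall.emb_injective H gens g h2
    exact congrArg _ (MHall.liftj_injective H gens g h3)
  have hrange : (Monoid.Coprod.lift H.subtype K.subtype).range = F' := by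
    rw [Monoid.Coprod.range_lift, Subgroup.range_subtype, Subgroup.range_subtype,
      ← MHall.H_eq H gens g hcl, hK, ← Subgroup.map_sup, MHall.ranges_sup_top,
      ← MonoidHom.range_eq_map]
  exact ⟨F', hFG, hFI, MHall.g_not_mem H gens g hg, K, hHle, hKle, hinj, hrange⟩

/-- Marshall Hall's theorem. -/
theorem marshall_hall {n : ℕ} (H : Subgroup (FreeGroup (Fin n))) (hfg : H.FG)
    (g : FreeGroup (Fin n)) (hg : g ∉ H) :
    ∃ F' : Subgroup (FreeGroup (Fin n)), F'.FG ∧ F'.FiniteIndex ∧ g ∉ F' ∧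
      ∃ K : Subgroup (FreeGroup (Fin n)), IsInternalFreeProduct F' H K := by
  obtain ⟨F', h1, h2, h3, K, h4⟩ := marshall_hall' H hfg g hg
  exact ⟨F', h1, h2, h3, K, h4⟩
end

section
/- Let H be a finitely generated e-algebraically closed proper subgroup of F_n. Then H has infinite index in F_n. -/
open Set Pointwise MeasureTheory

variable {T : Type*} [MetricSpace T]

/-- a f.g. e-algebraically closed proper subgroup of a free
group has infinite index. -/
theorem eAlgClosed_proper_infinite_index {n : ℕ}
    (H : Subgroup (FreeGroup (Fin n))) (hfg : H.FG)
    (heac : IsEAlgClosed H) (hproper : H ≠ ⊤) :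
    H.index = 0 := by
  by_contra hidx
  -- some generator lies outside H, else H = ⊤
  obtain ⟨i, hi⟩ : ∃ i : Fin n, FreeGroup.of i ∉ H := by
    by_contra hall
    push_neg at hall
    exact hproper (top_le_iff.mp (by
      rw [← FreeGroup.closure_range_of (Fin n)]
      exact Subgroup.closure_le H |>.mpr (by rintro x ⟨i, rfl⟩; exact hall i)))
  set g : FreeGroup (Fin n) := FreeGroup.of i with hg
  -- a positive power of g lies in H
  obtain ⟨m, hm0, -, hmH⟩ := Subgroup.exists_pow_mem_of_index_ne_zero hidx g
  -- g^m ≠ 1, since g maps to 1 under abelianization to ℤ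
  have hgm : g ^ m ≠ 1 := by
    intro h1
    have := congrArg (FreeGroup.lift (fun _ : Fin n => Multiplicative.ofAdd (1 : ℤ))) h1
    simp only [map_pow, map_one, FreeGroup.lift_apply_of] at this
    have : (Multiplicative.ofAdd (1 : ℤ)) ^ m = 1 := this
    rw [← ofAdd_nsmul, nsmul_eq_mul, mul_one] at this
    have := Multiplicative.ofAdd.injective this
    exact hm0.ne' (by exact_mod_cast this)
  -- use e-algebraic closedness at g
  have hinj := heac g hi
  set K := Subgroup.zpowers g with hK
  have hgK : g ^ (-(m : ℤ)) ∈ K := Subgroup.zpow_mem K (Subgroup.mem_zpowers g) _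
  set w : Monoid.Coprod H K :=
    Monoid.Coprod.inl (⟨g ^ m, hmH⟩ : H) * Monoid.Coprod.inr (⟨g ^ (-(m : ℤ)), hgK⟩ : K)
    with hw
  have hw1 : w = 1 := by
    apply hinj
    simp only [hw, map_mul, map_one, Monoid.Coprod.lift_apply_inl,
      Monoid.Coprod.lift_apply_inr, Subgroup.coe_subtype]
    show (g ^ m : FreeGroup (Fin n)) * g ^ (-(m : ℤ)) = 1
    rw [← zpow_natCast, ← zpow_add, add_neg_cancel, zpow_zero]
  -- apply the homomorphism killing H and keeping K
  have := congrArg (Monoid.Coprod.lift (1 : H →* FreeGroup (Fin n)) K.subtype) hw1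
  simp only [hw, map_mul, map_one, Monoid.Coprod.lift_apply_inl,
    Monoid.Coprod.lift_apply_inr, Subgroup.coe_subtype, MonoidHom.one_apply, one_mul] at this
  have : (g ^ (-(m : ℤ)) : FreeGroup (Fin n)) = 1 := this
  rw [zpow_neg, inv_eq_one, zpow_natCast] at this
  exact hgm this
end
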